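/- Let a, b : [0, ∞) → ℝ be continuous with a(v) < b(v) for all v, let f : [0, ∞) → ℝ be C¹ with a(v) < f′(v) < b(v) for all v, let δ > 0, and let c ∈ ℝ with a(0) < c < b(0). Then there exists a C¹ function f̄ : [0, ∞) → ℝ such that a(v) < f̄′(v) < b(v) for all v, f̄′(0) = c, and f̄(v) = f(v) for all v ≥ δ. -/

import Mathlib

private lemma convex_lt_left {p x y t : ℝ} (h0 : 0 ≤ t) (h1 : t ≤ 1)
    (hx : p < x) (hy : p < y) : p < x + t * (y - x) := by
  rcases le_total x y with h | h
  · have : x ≤ x + t * (y - x) := by nlinarith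
    linarith
  · have : y ≤ x + t * (y - x) := by nlinarith
    linarith

private lemma convex_lt_right {q x y t : ℝ} (h0 : 0 ≤ t) (h1 : t ≤ 1)
    (hx : x < q) (hy : y < q) : x + t * (y - x) < q := by
  rcases le_total x y with h | h
  · have : x + t * (y - x) ≤ y := by nlinarith
    linarith
  · have : x + t * (y - x) ≤ x := by nlinarith
    linarith

/-- One-dimensional Cut-off Homotopy Lemma: a solution of the open differential
inequality a < f' < b can be modified near 0 to achieve any admissible
derivative at 0, agreeing with f for v ≥ δ. -/
theorem cutoff_homotopy_one_dimensional
    (a b : ℝ → ℝ) (ha : ContinuousOn a (Set.Ici (0 : ℝ)))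
    (hb : ContinuousOn b (Set.Ici (0 : ℝ)))
    (hab : ∀ v : ℝ, 0 ≤ v → a v < b v)
    (f f' : ℝ → ℝ)
    (hderiv : ∀ v : ℝ, 0 ≤ v → HasDerivAt f (f' v) v)
    (hcont : ContinuousOn f' (Set.Ici (0 : ℝ)))
    (hf : ∀ v : ℝ, 0 ≤ v → a v < f' v ∧ f' v < b v)
    (δ : ℝ) (hδ : 0 < δ) (c : ℝ) (hc : a 0 < c ∧ c < b 0) :
    ∃ g g' : ℝ → ℝ,
      (∀ v : ℝ, 0 ≤ v → HasDerivAt g (g' v) v) ∧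
      ContinuousOn g' (Set.Ici (0 : ℝ)) ∧
      (∀ v : ℝ, 0 ≤ v → a v < g' v ∧ g' v < b v) ∧
      g' 0 = c ∧
      (∀ v : ℝ, δ ≤ v → g v = f v) := by
  classical
  -- continuous extensions to ℝ
  have hπcont : Continuous (fun v : ℝ => max v 0) := continuous_id.max continuous_const
  have hπmem : ∀ v : ℝ, max v 0 ∈ Set.Ici (0 : ℝ) := fun v => le_max_right v 0
  set F : ℝ → ℝ := fun v => f' (max v 0) with hFdef
  set A : ℝ → ℝ := fun v => a (max v 0) with hAdef
  set B : ℝ → ℝ := fun v => b (max v 0) with hBdef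
  have hFc : Continuous F := hcont.comp_continuous hπcont hπmem
  have hAc : Continuous A := ha.comp_continuous hπcont hπmem
  have hBc : Continuous B := hb.comp_continuous hπcont hπmem
  have hFeq : ∀ v : ℝ, 0 ≤ v → F v = f' v := fun v hv => by simp [hFdef, max_eq_left hv]
  have hAeq : ∀ v : ℝ, 0 ≤ v → A v = a v := fun v hv => by simp [hAdef, max_eq_left hv]
  have hBeq : ∀ v : ℝ, 0 ≤ v → B v = b v := fun v hv => by simp [hBdef, max_eq_left hv]
  -- margin m on [0, δ]
  set Φ : ℝ → ℝ := fun v => min (F v - A v) (B v - F v) with hΦdef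
  have hΦc : Continuous Φ := (hFc.sub hAc).min (hBc.sub hFc)
  obtain ⟨v₀, hv₀, hmin⟩ := isCompact_Icc.exists_isMinOn (Set.nonempty_Icc.2 hδ.le)
    hΦc.continuousOn
  set m : ℝ := Φ v₀ with hmdef
  have hΦpos : ∀ v : ℝ, 0 ≤ v → 0 < Φ v := by
    intro v hv
    have h1 := (hf v hv).1
    have h2 := (hf v hv).2
    simp only [hΦdef, hFeq v hv, hAeq v hv, hBeq v hv, lt_min_iff]
    constructor <;> linarith
  have hm : 0 < m := hΦpos v₀ hv₀.1
  have hmle : ∀ v : ℝ, v ∈ Set.Icc 0 δ → m ≤ Φ v := fun v hv => hmin hv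
  -- tent function on [δ/2, δ]
  set t : ℝ → ℝ := fun v => max 0 (min (v - δ / 2) (δ - v)) with htdef
  have htc : Continuous t :=
    continuous_const.max ((continuous_id.sub continuous_const).min
      (continuous_const.sub continuous_id))
  have htnn : ∀ v, 0 ≤ t v := fun v => le_max_left _ _
  have ht0 : ∀ v : ℝ, v ≤ δ / 2 → t v = 0 := by
    intro v hv
    simp only [htdef]
    exact max_eq_left ((min_le_left _ _).trans (by linarith))
  have ht0' : ∀ v : ℝ, δ ≤ v → t v = 0 := by
    intro v hv
    simp only [htdef]
    exact max_eq_left ((min_le_right _ _).trans (by linarith))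
  have htle : ∀ v : ℝ, t v ≤ δ := by
    intro v
    simp only [htdef]
    rcases le_total v δ with h | h
    · exact max_le hδ.le ((min_le_left _ _).trans (by linarith))
    · exact max_le hδ.le ((min_le_right _ _).trans (by linarith))
  set I : ℝ := ∫ x in (δ/2)..δ, t x with hIdef
  have hI : 0 < I := by
    apply intervalIntegral.intervalIntegral_pos_of_pos_on
      (htc.intervalIntegrable _ _)
    · intro x hx
      have h1 : 0 < x - δ / 2 := by linarith [hx.1]
      have h2 : 0 < δ - x := by linarith [hx.2]
      simp only [htdef]
      exact lt_max_of_lt_right (lt_min h1 h2)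
    · linarith
  have hIint : ∀ v : ℝ, δ ≤ v → (∫ x in (0:ℝ)..v, t x) = I := by
    intro v hv
    have i1 : IntervalIntegrable t MeasureTheory.volume 0 (δ/2) := htc.intervalIntegrable _ _
    have i2 : IntervalIntegrable t MeasureTheory.volume (δ/2) δ := htc.intervalIntegrable _ _
    have i3 : IntervalIntegrable t MeasureTheory.volume δ v := htc.intervalIntegrable _ _
    have e1 : (∫ x in (0:ℝ)..(δ/2), t x) = 0 := by
      rw [intervalIntegral.integral_congr (g := fun _ => (0:ℝ))]
      · simp
      · intro x hx
        rw [Set.uIcc_of_le (by linarith)] at hx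
        exact ht0 x hx.2
    have e3 : (∫ x in δ..v, t x) = 0 := by
      rw [intervalIntegral.integral_congr (g := fun _ => (0:ℝ))]
      · simp
      · intro x hx
        rw [Set.uIcc_of_le hv] at hx
        exact ht0' x hx.1
    have := intervalIntegral.integral_add_adjacent_intervals (i1.trans i2) i3
    rw [e3, add_zero] at this
    rw [← this, ← intervalIntegral.integral_add_adjacent_intervals i1 i2, e1, zero_add]
  -- bound M for |c - F| on [0, δ]
  obtain ⟨M, hM⟩ := isCompact_Icc.exists_bound_of_continuousOn
    (f := fun v => c - F v) ((continuous_const.sub hFc).continuousOn (s := Set.Icc 0 δ))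
  have hM0 : 0 ≤ M := (norm_nonneg _).trans (hM 0 ⟨le_refl 0, hδ.le⟩)
  -- neighborhood where c is admissible
  have hSopen : IsOpen {v : ℝ | A v < c ∧ c < B v} :=
    (isOpen_lt hAc continuous_const).inter (isOpen_lt continuous_const hBc)
  have hS0 : (0:ℝ) ∈ {v : ℝ | A v < c ∧ c < B v} := by
    constructor
    · simpa [hAeq 0 le_rfl] using hc.1
    · simpa [hBeq 0 le_rfl] using hc.2
  obtain ⟨r, hr, hball⟩ := Metric.isOpen_iff.1 hSopen 0 hS0
  -- choose ε
  set ε : ℝ := min (r/2) (min (δ/2) (m * I / (2 * δ * (M + 1)))) with hεdef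
  have hεpos : 0 < ε := by
    apply lt_min (by linarith)
    apply lt_min (by linarith)
    positivity
  have hεr : ε ≤ r / 2 := min_le_left _ _
  have hεδ : ε ≤ δ / 2 := le_trans (min_le_right _ _) (min_le_left _ _)
  have hεm : ε ≤ m * I / (2 * δ * (M + 1)) := le_trans (min_le_right _ _) (min_le_right _ _)
  have hadm : ∀ v : ℝ, 0 ≤ v → v ≤ ε → A v < c ∧ c < B v := by
    intro v hv hvε
    apply hball
    rw [Metric.mem_ball, Real.dist_eq, sub_zero, abs_of_nonneg hv]
    linarith
  -- cutoff θ
  set θ : ℝ → ℝ := fun v => max 0 (1 - v / ε) with hθdef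
  have hθc : Continuous θ :=
    continuous_const.max (continuous_const.sub (continuous_id.div_const ε))
  have hθnn : ∀ v, 0 ≤ θ v := fun v => le_max_left _ _
  have hθle : ∀ v : ℝ, 0 ≤ v → θ v ≤ 1 := by
    intro v hv
    apply max_le zero_le_one
    have : 0 ≤ v / ε := div_nonneg hv hεpos.le
    linarith
  have hθ0 : θ 0 = 1 := by simp [hθdef]
  have hθzero : ∀ v : ℝ, ε ≤ v → θ v = 0 := by
    intro v hv
    simp only [hθdef]
    apply max_eq_left
    have : 1 ≤ v / ε := (one_le_div hεpos).2 hv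
    linarith
  -- the correction constant
  set C : ℝ := ∫ x in (0:ℝ)..ε, θ x * (c - F x) with hCdef
  have hCb : |C| ≤ M * ε := by
    have : ‖C‖ ≤ M * |ε - 0| := by
      apply intervalIntegral.norm_integral_le_of_norm_le_const
      intro x hx
      rw [Set.uIoc_of_le hεpos.le] at hx
      have hx0 : 0 ≤ x := hx.1.le
      have hxδ : x ∈ Set.Icc (0:ℝ) δ := ⟨hx0, by linarith [hx.2]⟩
      calc ‖θ x * (c - F x)‖ = |θ x| * ‖c - F x‖ := by rw [norm_mul]; rfl
        _ ≤ 1 * M := by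
            apply mul_le_mul _ (hM x hxδ) (norm_nonneg _) zero_le_one
            rw [abs_of_nonneg (hθnn x)]; exact hθle x hx0
        _ = M := one_mul M
    simpa [abs_of_nonneg hεpos.le] using this
  set β : ℝ := -C / I with hβdef
  have hβb : |β| * δ ≤ m / 2 := by
    have h1 : |β| = |C| / I := by
      rw [hβdef, abs_div, abs_neg, abs_of_pos hI]
    have h2 : |C| * δ ≤ M * ε * δ := by
      apply mul_le_mul_of_nonneg_right hCb hδ.le
    have h3 : ε * (2 * δ * (M + 1)) ≤ m * I := by
      rw [← le_div_iff₀ (by positivity)]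
      exact hεm
    have h4 : M * ε * δ * 2 ≤ m * I := by nlinarith
    rw [h1, div_mul_eq_mul_div, div_le_iff₀ hI]
    nlinarith [abs_nonneg C]
  -- the new derivative and function
  set h : ℝ → ℝ := fun v => θ v * (c - F v) + β * t v with hhdef
  have hhc : Continuous h := (hθc.mul (continuous_const.sub hFc)).add (continuous_const.mul htc)
  refine ⟨fun v => f v + ∫ x in (0:ℝ)..v, h x, fun v => F v + h v, ?_, ?_, ?_, ?_, ?_⟩
  · -- derivative
    intro v hv
    have hint : HasDerivAt (fun u => ∫ x in (0:ℝ)..u, h x) (h v) v :=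
      intervalIntegral.integral_hasDerivAt_right (hhc.intervalIntegrable _ _)
        (hhc.stronglyMeasurableAtFilter _ _) hhc.continuousAt
    have := (hderiv v hv).add hint
    rwa [← hFeq v hv] at this
  · -- continuity of g'
    exact (hFc.add hhc).continuousOn
  · -- admissibility
    intro v hv
    rw [← hAeq v hv, ← hBeq v hv]
    rcases le_or_gt v δ with hvδ | hvδ
    · rcases le_or_gt v ε with hvε | hvε
      · -- interpolation zone
        have ht' : t v = 0 := ht0 v (by linarith)
        have hθ1 := hθle v hv
        have hθ2 := hθnn v
        have hF1 : A v < F v := by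
          rw [hAeq v hv, hFeq v hv]; exact (hf v hv).1
        have hF2 : F v < B v := by
          rw [hBeq v hv, hFeq v hv]; exact (hf v hv).2
        obtain ⟨hc1, hc2⟩ := hadm v hv hvε
        simp only [hhdef, ht', mul_zero, add_zero]
        exact ⟨convex_lt_left hθ2 hθ1 hF1 hc1, convex_lt_right hθ2 hθ1 hF2 hc2⟩
      · -- bump zone
        have hθ' : θ v = 0 := hθzero v hvε.le
        have hβt : |β * t v| ≤ m / 2 := by
          rw [abs_mul, abs_of_nonneg (htnn v)]
          calc |β| * t v ≤ |β| * δ := mul_le_mul_of_nonneg_left (htle v) (abs_nonneg β)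
            _ ≤ m / 2 := hβb
        have hβt1 : -(m/2) ≤ β * t v := (abs_le.1 hβt).1
        have hβt2 : β * t v ≤ m/2 := (abs_le.1 hβt).2
        have hΦv := hmle v ⟨hv, hvδ⟩
        have h1 : m ≤ F v - A v := le_trans hΦv (min_le_left _ _)
        have h2 : m ≤ B v - F v := le_trans hΦv (min_le_right _ _)
        simp only [hhdef, hθ', zero_mul, zero_add]
        constructor <;> linarith
    · -- unchanged zone
      have hθ' : θ v = 0 := hθzero v (by linarith)
      have ht' : t v = 0 := ht0' v hvδ.le
      simp only [hhdef, hθ', ht', zero_mul, mul_zero, add_zero]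
      have hF1 : A v < F v := by
        rw [hAeq v hv, hFeq v hv]; exact (hf v hv).1
      have hF2 : F v < B v := by
        rw [hBeq v hv, hFeq v hv]; exact (hf v hv).2
      exact ⟨hF1, hF2⟩
  · -- value at 0
    have ht' : t 0 = 0 := ht0 0 (by linarith)
    simp only [hhdef, hθ0, ht', one_mul, mul_zero, add_zero]
    rw [hFeq 0 le_rfl]
    ring
  · -- agreement beyond δ
    intro v hv
    have hεδ' : ε ≤ v := by linarith
    have hsplit : (∫ x in (0:ℝ)..v, h x) = 0 := by
      have iθ : IntervalIntegrable (fun x => θ x * (c - F x)) MeasureTheory.volume 0 v :=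
        (hθc.mul (continuous_const.sub hFc)).intervalIntegrable _ _
      have it : IntervalIntegrable (fun x => β * t x) MeasureTheory.volume 0 v :=
        (continuous_const.mul htc).intervalIntegrable _ _
      have e0 : (∫ x in (0:ℝ)..v, h x)
          = (∫ x in (0:ℝ)..v, θ x * (c - F x)) + ∫ x in (0:ℝ)..v, β * t x := by
        rw [hhdef, intervalIntegral.integral_add iθ it]
      have e1 : (∫ x in (0:ℝ)..v, θ x * (c - F x)) = C := by
        have i1 : IntervalIntegrable (fun x => θ x * (c - F x)) MeasureTheory.volume 0 ε :=
          (hθc.mul (continuous_const.sub hFc)).intervalIntegrable _ _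
        have i2 : IntervalIntegrable (fun x => θ x * (c - F x)) MeasureTheory.volume ε v :=
          (hθc.mul (continuous_const.sub hFc)).intervalIntegrable _ _
        have e2 : (∫ x in ε..v, θ x * (c - F x)) = 0 := by
          rw [intervalIntegral.integral_congr (g := fun _ => (0:ℝ))]
          · simp
          · intro x hx
            rw [Set.uIcc_of_le hεδ'] at hx
            simp [hθzero x hx.1]
        rw [← intervalIntegral.integral_add_adjacent_intervals i1 i2, e2, add_zero, hCdef]
      have e2 : (∫ x in (0:ℝ)..v, β * t x) = β * I := by
        rw [intervalIntegral.integral_const_mul, hIint v hv]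
      rw [e0, e1, e2, hβdef]
      field_simp
      ring
    simp [hsplit]
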